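/- Let z_1, ..., z_t ∈ ℝ^d satisfy ‖z_i‖ ≤ c for all i, and let V_t = λI + ∑_{i=1}^t z_i z_i^⊤ with λ > 0. Then log(det(V_t) / det(λI)) ≤ d · log((λ d + t c²) / (λ d)). -/

import Mathlib

open Matrix Finset Real

lemma myVecMulVec_mulVec {d : ℕ} (w v x : Fin d → ℝ) :
    Matrix.vecMulVec w v *ᵥ x = (v ⬝ᵥ x) • w := by
  funext i
  simp only [Matrix.mulVec, Matrix.vecMulVec_apply, dotProduct, Pi.smul_apply,
    smul_eq_mul, Finset.sum_mul, Finset.mul_sum]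
  exact Finset.sum_congr rfl fun j _ => by ring

lemma mySum_mulVec {d t : ℕ} (A : Fin t → Matrix (Fin d) (Fin d) ℝ) (x : Fin d → ℝ) :
    (∑ i, A i) *ᵥ x = ∑ i, A i *ᵥ x := by
  funext j
  simp [Matrix.mulVec, dotProduct, Matrix.sum_apply, Finset.sum_mul]
  exact Finset.sum_comm

lemma myDotProduct_sum {d t : ℕ} (x : Fin d → ℝ) (f : Fin t → Fin d → ℝ) :
    x ⬝ᵥ (∑ i, f i) = ∑ i, x ⬝ᵥ f i := by
  simp [dotProduct, Finset.mul_sum]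
  exact Finset.sum_comm

theorem log_det_bound {d t : ℕ} (z : Fin t → Fin d → ℝ) (c lam : ℝ)
    (hc : ∀ i, Real.sqrt (∑ j, z i j ^ 2) ≤ c) (hlam : 0 < lam)
    (V : Matrix (Fin d) (Fin d) ℝ)
    (hV : V = lam • (1 : Matrix (Fin d) (Fin d) ℝ) +
      ∑ i, Matrix.vecMulVec (z i) (z i)) :
    Real.log (V.det / (lam • (1 : Matrix (Fin d) (Fin d) ℝ)).det) ≤
      (d : ℝ) * Real.log ((lam * d + t * c ^ 2) / (lam * d)) := by
  have hdetI : (lam • (1 : Matrix (Fin d) (Fin d) ℝ)).det = lam ^ d := by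
    simp [Matrix.det_smul]
  rcases Nat.eq_zero_or_pos d with hd | hd
  · subst hd
    simp [Matrix.det_fin_zero]
  have hd' : (0:ℝ) < d := by exact_mod_cast hd
  -- Hermitian
  have hH : V.IsHermitian := by
    rw [hV]
    apply Matrix.IsHermitian.add
    · simp [Matrix.IsHermitian, Matrix.conjTranspose_smul]
    · rw [Matrix.IsHermitian, Matrix.conjTranspose_sum]
      refine Finset.sum_congr rfl fun i _ => ?_
      ext a b
      simp [Matrix.conjTranspose_apply, Matrix.vecMulVec_apply, mul_comm]
  -- quadratic form
  have hq : ∀ x : Fin d → ℝ, x ⬝ᵥ (V *ᵥ x) = lam * (x ⬝ᵥ x) + ∑ i, (z i ⬝ᵥ x)^2 := by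
    intro x
    rw [hV, Matrix.add_mulVec, mySum_mulVec, dotProduct_add, myDotProduct_sum]
    congr 1
    · rw [Matrix.smul_mulVec, Matrix.one_mulVec, dotProduct_smul]
      simp
    · refine Finset.sum_congr rfl fun i _ => ?_
      rw [myVecMulVec_mulVec, dotProduct_smul, smul_eq_mul, dotProduct_comm, sq]
  have hPD : V.PosDef := by
    refine Matrix.posDef_iff_dotProduct_mulVec.mpr ⟨hH, fun x hx => ?_⟩
    have hsx : star x = x := rfl
    rw [hsx, hq]
    have h1 : 0 < x ⬝ᵥ x := by
      have := Matrix.dotProduct_star_self_pos_iff (v := x) (R := ℝ)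
      rw [hsx] at this
      exact this.mpr hx
    have h2 : 0 ≤ ∑ i, (z i ⬝ᵥ x)^2 := Finset.sum_nonneg fun i _ => sq_nonneg _
    nlinarith
  set μ : Fin d → ℝ := hH.eigenvalues with hμdef
  have hμ : ∀ i, 0 < μ i := fun i => hPD.eigenvalues_pos i
  have hdet : V.det = ∏ i, μ i := by
    simpa using hH.det_eq_prod_eigenvalues
  have htr : V.trace = ∑ i, μ i := by
    simpa using hH.trace_eq_sum_eigenvalues
  have htrV : V.trace = lam * d + ∑ i, ∑ j, z i j ^ 2 := by
    rw [hV, Matrix.trace_add, Matrix.trace_sum]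
    simp [Matrix.trace_smul, Matrix.trace_one, Matrix.trace, Matrix.diag,
      Matrix.vecMulVec_apply, sq]
    ring
  have hnorm : ∀ i, ∑ j, z i j ^2 ≤ c^2 := by
    intro i
    have h1 : (0:ℝ) ≤ ∑ j, z i j ^2 := Finset.sum_nonneg fun j _ => sq_nonneg _
    have h2 := hc i
    nlinarith [Real.sq_sqrt h1, Real.sqrt_nonneg (∑ j, z i j ^2)]
  have htle : V.trace ≤ lam * d + t * c^2 := by
    rw [htrV]
    have h3 : ∑ i, ∑ j, z i j ^2 ≤ (t:ℝ) * c^2 := by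
      calc ∑ i, ∑ j, z i j ^2 ≤ ∑ _i : Fin t, c^2 := Finset.sum_le_sum fun i _ => hnorm i
        _ = (t:ℝ) * c^2 := by simp [Finset.sum_const, Finset.card_univ]
    linarith
  have hTpos : 0 < V.trace := by
    rw [htr]
    exact Finset.sum_pos (fun i _ => hμ i) ⟨⟨0, hd⟩, Finset.mem_univ _⟩
  -- geometric-arithmetic mean
  have hgm : ∏ i, μ i ^ ((d:ℝ)⁻¹) ≤ ∑ i, (d:ℝ)⁻¹ * μ i := by
    refine Real.geom_mean_le_arith_mean_weighted Finset.univ _ _ (fun i _ => by positivity)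
      ?_ (fun i _ => (hμ i).le)
    simp [Finset.sum_const, Finset.card_univ]
    field_simp
  have hgm' : ∏ i, μ i ^ ((d:ℝ)⁻¹) ≤ (d:ℝ)⁻¹ * V.trace := by
    rw [htr, Finset.mul_sum]; exact hgm
  have hlog1 : (d:ℝ)⁻¹ * Real.log V.det ≤ Real.log ((d:ℝ)⁻¹ * V.trace) := by
    have hlp : Real.log (∏ i, μ i ^ ((d:ℝ)⁻¹)) = (d:ℝ)⁻¹ * Real.log V.det := by
      rw [Real.log_prod (fun i _ => (Real.rpow_pos_of_pos (hμ i) _).ne'), hdet,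
        Real.log_prod (fun i _ => (hμ i).ne'), Finset.mul_sum]
      exact Finset.sum_congr rfl fun i _ => Real.log_rpow (hμ i) _
    rw [← hlp]
    exact Real.log_le_log (Finset.prod_pos fun i _ => Real.rpow_pos_of_pos (hμ i) _) hgm'
  have hdpos : 0 < V.det := hPD.det_pos
  -- put it together
  rw [hdetI, Real.log_div hdpos.ne' (by positivity), Real.log_pow]
  have key : Real.log V.det - (d:ℝ) * Real.log lam ≤
      (d:ℝ) * Real.log ((d:ℝ)⁻¹ * V.trace / lam) := by
    rw [Real.log_div (by positivity) hlam.ne', mul_sub]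
    have := mul_le_mul_of_nonneg_left hlog1 hd'.le
    rw [← mul_assoc, mul_inv_cancel₀ hd'.ne', one_mul] at this
    linarith
  refine key.trans ?_
  have harg : (d:ℝ)⁻¹ * V.trace / lam ≤ (lam * d + t * c ^ 2) / (lam * d) := by
    rw [div_le_div_iff₀ (by positivity) (by positivity)]
    have h4 : (d:ℝ)⁻¹ * V.trace * (lam * d) = lam * V.trace := by
      field_simp
    rw [h4]
    nlinarith
  exact mul_le_mul_of_nonneg_left
    (Real.log_le_log (by positivity) harg) hd'.le
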